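/- In G_k (viewed as a bi-directed ancestral graph, so every vertex on any path is a collider), a collider path of the form (a_1, {a_1,a_2}, a_2, …, {a_{k−1},a_k}, a_k) induced by a permutation of V1 is minimal: no proper subsequence of its vertices containing both endpoints forms a path in G_k. -/

import Mathlib

open Classical in
/-- Vertex type of the bipartite graph `G k`: `V1 = Fin k` plus `V2` = unordered
pairs of distinct elements of `V1`. -/
abbrev GVert (k : ℕ) := Fin k ⊕ {p : Sym2 (Fin k) // ¬ p.IsDiag}

/-- The bipartite graph `G k`: `a ∈ V1` is adjacent to `p ∈ V2` iff `a ∈ p`. -/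
def biG (k : ℕ) : SimpleGraph (GVert k) where
  Adj x y := ∃ (a : Fin k) (p : {p : Sym2 (Fin k) // ¬ p.IsDiag}),
    a ∈ p.val ∧ ((x = Sum.inl a ∧ y = Sum.inr p) ∨ (x = Sum.inr p ∧ y = Sum.inl a))
  symm := by constructor; rintro x y ⟨a, p, hm, (⟨rfl, rfl⟩ | ⟨rfl, rfl⟩)⟩ <;> exact ⟨a, p, hm, by tauto⟩
  loopless := by constructor; rintro x ⟨a, p, hm, (⟨rfl, h⟩ | ⟨rfl, h⟩)⟩ <;> simp_all

/-- The `V2`-vertex `{a,b}` (junk value `inl a` if `a = b`). -/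
def pairV {k : ℕ} (a b : Fin k) : GVert k :=
  if h : a = b then Sum.inl a else Sum.inr ⟨s(a, b), by simp [h]⟩

/-- The alternating list of vertices `a₁, {a₁,a₂}, a₂, …` associated to a list in `V1`. -/
def altList {k : ℕ} : List (Fin k) → List (GVert k)
  | [] => []
  | [a] => [Sum.inl a]
  | a :: b :: rest => Sum.inl a :: pairV a b :: altList (b :: rest)

/-- The alternating path associated to a permutation of `Fin k`. -/
def permPath {k : ℕ} (σ : Equiv.Perm (Fin k)) : List (GVert k) :=
  altList ((List.finRange k).map σ)

/-- `L` is a path: consecutive vertices adjacent and no repeats. -/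
def IsPathList {V : Type*} (G : SimpleGraph V) (L : List V) : Prop :=
  List.Chain' G.Adj L ∧ L.Nodup

/-- `L` is a minimal path: no proper subsequence with the same endpoints is a path. -/
def IsMinimalPath {V : Type*} (G : SimpleGraph V) (L : List V) : Prop :=
  IsPathList G L ∧ ∀ L' : List V, L'.Sublist L → L'.head? = L.head? →
    L'.getLast? = L.getLast? → IsPathList G L' → L' = L

namespace AuxMin
variable {k : ℕ}

lemma pairV_eq {a b : Fin k} (h : a ≠ b) :
    pairV a b = Sum.inr ⟨s(a, b), by simp [h]⟩ := by
  simp [pairV, h]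

lemma adj_left {a b : Fin k} (h : a ≠ b) : (biG k).Adj (Sum.inl a) (pairV a b) := by
  rw [pairV_eq h]; exact ⟨a, _, by simp, Or.inl ⟨rfl, rfl⟩⟩

lemma adj_right {a b : Fin k} (h : a ≠ b) : (biG k).Adj (pairV a b) (Sum.inl b) := by
  rw [pairV_eq h]; exact ⟨b, _, by simp, Or.inr ⟨rfl, rfl⟩⟩

lemma altList_head? (l : List (Fin k)) : (altList l).head? = l.head?.map Sum.inl := by
  match l with
  | [] => rfl
  | [a] => rfl
  | a :: b :: rest => rfl

lemma altList_cons (a b : Fin k) (rest : List (Fin k)) :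
    altList (a :: b :: rest) = Sum.inl a :: pairV a b :: altList (b :: rest) := rfl

lemma altList_exists_cons (b : Fin k) (rest : List (Fin k)) :
    ∃ L, altList (b :: rest) = Sum.inl b :: L := by
  cases rest <;> exact ⟨_, rfl⟩

lemma altList_getLast? : ∀ (l : List (Fin k)), (altList l).getLast? = l.getLast?.map Sum.inl
  | [] => rfl
  | [a] => rfl
  | a :: b :: rest => by
    obtain ⟨L, hE⟩ := altList_exists_cons b rest
    rw [altList_cons, List.getLast?_cons_cons, hE, List.getLast?_cons_cons, ← hE,
      altList_getLast? (b :: rest), List.getLast?_cons_cons]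

lemma mem_inl : ∀ {l : List (Fin k)} {c : Fin k}, Sum.inl c ∈ altList l → c ∈ l
  | [], c, h => by simp [altList] at h
  | [a], c, h => by
    simp only [altList, List.mem_singleton, Sum.inl.injEq] at h
    simp [h]
  | a :: b :: rest, c, h => by
    rw [altList_cons] at h
    simp only [List.mem_cons] at h
    rcases h with h | h | h
    · simp_all
    · by_cases hab : a = b
      · simp [pairV, hab] at h; simp [h, hab]
      · rw [pairV_eq hab] at h; simp at h
    · have := mem_inl h
      simp_all

lemma mem_inr : ∀ {l : List (Fin k)} {p : {p : Sym2 (Fin k) // ¬ p.IsDiag}},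
    Sum.inr p ∈ altList l → ∀ x ∈ p.val, x ∈ l
  | [], p, h => by simp [altList] at h
  | [a], p, h => by simp [altList] at h
  | a :: b :: rest, p, h => by
    rw [altList_cons] at h
    simp only [List.mem_cons] at h
    rcases h with h | h | h
    · simp at h
    · by_cases hab : a = b
      · simp [pairV, hab] at h
      · rw [pairV_eq hab] at h
        obtain rfl : p = ⟨s(a, b), by simp [hab]⟩ := by simpa using h
        intro x hx
        rcases Sym2.mem_iff.mp hx with rfl | rfl <;> simp
    · intro x hx
      have := mem_inr h x hx
      simp_all

lemma altList_chain' : ∀ (l : List (Fin k)), l.Nodup → List.Chain' (biG k).Adj (altList l)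
  | [], _ => List.isChain_nil
  | [a], _ => List.isChain_singleton _
  | a :: b :: rest, h => by
    have hnm : a ∉ b :: rest := (List.nodup_cons.mp h).1
    have hab : a ≠ b := fun hh => hnm (hh ▸ List.mem_cons_self)
    have h2 : (b :: rest).Nodup := (List.nodup_cons.mp h).2
    have IH := altList_chain' (b :: rest) h2
    obtain ⟨L, hE⟩ := altList_exists_cons b rest
    rw [altList_cons, hE]
    rw [hE] at IH
    exact List.isChain_cons_cons.mpr ⟨adj_left hab, List.isChain_cons_cons.mpr ⟨adj_right hab, IH⟩⟩

lemma altList_nodup : ∀ (l : List (Fin k)), l.Nodup → (altList l).Nodup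
  | [], _ => List.nodup_nil
  | [a], _ => List.nodup_singleton _
  | a :: b :: rest, h => by
    have hnm : a ∉ b :: rest := (List.nodup_cons.mp h).1
    have hab : a ≠ b := fun hh => hnm (hh ▸ List.mem_cons_self)
    have h2 : (b :: rest).Nodup := (List.nodup_cons.mp h).2
    rw [altList_cons]
    refine List.nodup_cons.mpr ⟨?_, List.nodup_cons.mpr ⟨?_, altList_nodup _ h2⟩⟩
    · intro hmem
      simp only [List.mem_cons] at hmem
      rcases hmem with h' | h'
      · rw [pairV_eq hab] at h'; simp at h'
      · exact hnm (mem_inl h')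
    · intro hm
      rw [pairV_eq hab] at hm
      exact hnm (mem_inr hm a (by simp))

lemma min_aux : ∀ (l : List (Fin k)), l.Nodup → ∀ L' : List (GVert k),
    L'.Sublist (altList l) → L'.head? = (altList l).head? →
    L'.getLast? = (altList l).getLast? → IsPathList (biG k) L' → L' = altList l
  | [], _, L', hs, _, _, _ => List.sublist_nil.mp hs
  | [a], _, L', hs, hh, _, _ => by
    cases hs with
    | cons _ hs' =>
      exfalso
      rw [List.sublist_nil.mp hs'] at hh
      simp [altList] at hh
    | cons_cons _ hs' =>
      rw [List.sublist_nil.mp hs']; rfl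
  | a :: b :: rest, h, L', hs, hh, hl, hp => by
    have hnm : a ∉ b :: rest := (List.nodup_cons.mp h).1
    have hab : a ≠ b := fun hh' => hnm (hh' ▸ List.mem_cons_self)
    have h2 : (b :: rest).Nodup := (List.nodup_cons.mp h).2
    rw [altList_head?] at hh
    obtain ⟨x0, T, rfl⟩ : ∃ x0 T, L' = x0 :: T := by
      cases L' with
      | nil => simp at hh
      | cons x0 T => exact ⟨x0, T, rfl⟩
    obtain rfl : x0 = Sum.inl a := by simpa using hh
    rw [altList_cons, pairV_eq hab] at hs
    have hT : T.Sublist (Sum.inr ⟨s(a, b), by simp [hab]⟩ :: altList (b :: rest)) := by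
      cases hs with
      | cons _ hs' =>
        exfalso
        have hm : Sum.inl a ∈
            (Sum.inr ⟨s(a, b), by simp [hab]⟩ : GVert k) :: altList (b :: rest) :=
          hs'.subset (List.mem_cons_self)
        simp only [List.mem_cons] at hm
        rcases hm with h' | h'
        · simp at h'
        · exact hnm (mem_inl h')
      | cons_cons _ hs' => exact hs'
    cases T with
    | nil =>
      exfalso
      have key : some (Sum.inl a : GVert k) = ((a :: b :: rest).getLast?).map Sum.inl := by
        rw [← altList_getLast?, ← hl]; rfl
      obtain ⟨c', hc', hc2⟩ := Option.map_eq_some_iff.mp key.symm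
      have hca : c' = a := by simpa using hc2
      rw [List.getLast?_cons_cons] at hc'
      obtain ⟨hne, hcl⟩ := List.mem_getLast?_eq_getLast hc'
      exact hnm (hca ▸ hcl ▸ List.getLast_mem hne)
    | cons x T' =>
      obtain ⟨hadj, hchain⟩ := List.isChain_cons_cons.mp hp.1
      obtain ⟨c, p, hcp, hor⟩ := hadj
      rcases hor with ⟨h1, rfl⟩ | ⟨h1, _⟩
      · -- x = Sum.inr p, inl a = inl c
        obtain rfl : a = c := by simpa using h1
        cases hT with
        | cons _ hs' =>
          exfalso
          have hm : (Sum.inr p : GVert k) ∈ altList (b :: rest) :=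
            hs'.subset (List.mem_cons_self)
          exact hnm (mem_inr hm a hcp)
        | cons_cons _ hT' =>
          -- now p = ⟨s(a,b), _⟩ and hT' : T'.Sublist (altList (b :: rest))
          cases T' with
          | nil =>
            exfalso
            have key : some (Sum.inr (⟨s(a, b), by simp [hab]⟩ :
                {p : Sym2 (Fin k) // ¬ p.IsDiag}) : GVert k) =
                ((a :: b :: rest).getLast?).map Sum.inl := by
              rw [← altList_getLast?, ← hl]; rfl
            obtain ⟨c', hc', hc2⟩ := Option.map_eq_some_iff.mp key.symm
            simp at hc2
          | cons y T'' =>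
            obtain ⟨hadj2, hchain2⟩ := List.isChain_cons_cons.mp hchain
            obtain ⟨c2, p2, hcp2, hor2⟩ := hadj2
            rcases hor2 with ⟨h1', _⟩ | ⟨h1', rfl⟩
            · simp at h1'
            · -- y = Sum.inl c2
              obtain rfl : p2 = ⟨s(a, b), by simp [hab]⟩ := by simpa using h1'.symm
              have hc2ab : c2 = a ∨ c2 = b := Sym2.mem_iff.mp hcp2
              have hc2b : c2 = b := by
                rcases hc2ab with rfl | rfl
                · exfalso
                  have := hp.2
                  simp at this
                · rfl
              have hIH := min_aux (b :: rest) h2 (Sum.inl c2 :: T'') hT'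
                (by rw [altList_head?, hc2b]; rfl)
                (by
                  have : (Sum.inl a :: (Sum.inr ⟨s(a, b), by simp [hab]⟩ : GVert k) ::
                      Sum.inl c2 :: T'').getLast? = (Sum.inl c2 :: T'').getLast? := by
                    rw [List.getLast?_cons_cons, List.getLast?_cons_cons]
                  rw [← this, hl, altList_getLast?, altList_getLast?,
                    List.getLast?_cons_cons])
                ⟨(List.isChain_cons_cons.mp hchain).2, (hp.2.of_cons).of_cons⟩
              rw [altList_cons, pairV_eq hab, ← hIH]
      · simp at h1

end AuxMin

theorem stmt5 (k : ℕ) (σ : Equiv.Perm (Fin k)) :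
    IsMinimalPath (biG k) (permPath σ) := by
  have hnd : ((List.finRange k).map σ).Nodup :=
    (List.nodup_finRange k).map σ.injective
  exact ⟨⟨AuxMin.altList_chain' _ hnd, AuxMin.altList_nodup _ hnd⟩,
    fun L' hs hh hl hp => AuxMin.min_aux _ hnd L' hs hh hl hp⟩
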